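/- Let H : ℝ × ℝ × ℝ → ℝ be C¹, let (z₀, x₀) ∈ ℝ² satisfy H(z₀, x₀, 0) = 0, and assume ∂H/∂z (z₀, x₀, 0) ≠ 0. Then for every pair of hyperreals (x, d) with x ≈ x₀ and d ≈ 0, there exists a hyperreal z with st(z) = z₀ and H*(z, x, d) = 0. -/

import Mathlib

open Hyperreal

/-- The nonstandard (ultrapower) lifting of a ternary standard function to the
hyperreals. -/
noncomputable def Hyperreal.lift3 (H : ℝ → ℝ → ℝ → ℝ) (z x d : ℝ*) : ℝ* :=
  Filter.Germ.map₂ (fun z' (p : ℝ × ℝ) => H z' p.1 p.2) z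
    (Filter.Germ.map₂ (Prod.mk : ℝ → ℝ → ℝ × ℝ) x d)

open Filter Topology in
/-- Standard-world version: a continuous local solution map exists near `(x₀, 0)`. -/
theorem exists_local_solution_map (H : ℝ → ℝ → ℝ → ℝ)
    (hH : ContDiff ℝ 1 (fun p : ℝ × ℝ × ℝ => H p.1 p.2.1 p.2.2))
    (z₀ x₀ : ℝ) (h0 : H z₀ x₀ 0 = 0)
    (hJ : deriv (fun z => H z x₀ 0) z₀ ≠ 0) :
    ∃ g : ℝ × ℝ → ℝ, g (x₀, 0) = z₀ ∧ ContinuousAt g (x₀, 0) ∧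
      ∀ᶠ q : ℝ × ℝ in 𝓝 (x₀, 0), H (g q) q.1 q.2 = 0 := by
  set Hf : ℝ × ℝ × ℝ → ℝ := fun p => H p.1 p.2.1 p.2.2 with hHf
  set p₀ : ℝ × ℝ × ℝ := (z₀, x₀, 0) with hp₀
  set A : (ℝ × ℝ × ℝ) →L[ℝ] ℝ := fderiv ℝ Hf p₀ with hA
  have hHfA : HasStrictFDerivAt Hf A p₀ :=
    hH.contDiffAt.hasStrictFDerivAt one_ne_zero
  -- relate the 1D derivative hypothesis to A
  have hA1 : A (1, 0, 0) ≠ 0 := by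
    have hi : HasDerivAt (fun z : ℝ => (z, ((x₀ : ℝ), (0 : ℝ)))) (1, ((0:ℝ), (0:ℝ))) z₀ :=
      (hasDerivAt_id z₀).prodMk (hasDerivAt_const _ _)
    have hcomp : HasDerivAt (fun z : ℝ => Hf (z, x₀, 0)) (A (1, 0, 0)) z₀ :=
      by have := HasFDerivAt.comp_hasDerivAt (x := z₀) hHfA.hasFDerivAt hi; exact this
    have hd : deriv (fun z => H z x₀ 0) z₀ = A (1, 0, 0) := hcomp.deriv
    exact hd ▸ hJ
  -- the full map Φ and its derivative
  set Φ : ℝ × ℝ × ℝ → ℝ × ℝ × ℝ := fun p => (Hf p, p.2) with hΦ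
  set Φ' : (ℝ × ℝ × ℝ) →L[ℝ] ℝ × ℝ × ℝ :=
    A.prod (ContinuousLinearMap.snd ℝ ℝ (ℝ × ℝ)) with hΦ'
  have hΦd : HasStrictFDerivAt Φ Φ' p₀ :=
    hHfA.prodMk (ContinuousLinearMap.snd ℝ ℝ (ℝ × ℝ)).hasStrictFDerivAt
  have hinj : Function.Injective Φ' := by
    refine (injective_iff_map_eq_zero Φ').2 ?_
    rintro ⟨v1, v2, v3⟩ hv
    rw [Prod.ext_iff, Prod.ext_iff] at hv
    obtain ⟨hA0, h2, h3⟩ : A (v1, v2, v3) = 0 ∧ v2 = 0 ∧ v3 = 0 := by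
      simpa [Φ', ContinuousLinearMap.prod_apply] using hv
    subst h2; subst h3
    have hsm : ((v1 : ℝ), ((0:ℝ), (0:ℝ))) = v1 • ((1:ℝ), ((0:ℝ), (0:ℝ))) := by
      simp [Prod.smul_mk]
    rw [hsm, map_smul, smul_eq_mul] at hA0
    rcases mul_eq_zero.1 hA0 with h | h
    · simp [h]
    · exact absurd h hA1
  have hbij : Function.Bijective (Φ'.toLinearMap) :=
    ⟨hinj, LinearMap.injective_iff_surjective.mp hinj⟩
  set e : (ℝ × ℝ × ℝ) ≃L[ℝ] ℝ × ℝ × ℝ :=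
    (LinearEquiv.ofBijective Φ'.toLinearMap hbij).toContinuousLinearEquiv with he
  have hecoe : (e : (ℝ × ℝ × ℝ) →L[ℝ] ℝ × ℝ × ℝ) = Φ' := by
    exact ContinuousLinearMap.ext fun v => rfl
  have hΦe : HasStrictFDerivAt Φ (e : (ℝ × ℝ × ℝ) →L[ℝ] ℝ × ℝ × ℝ) p₀ := by
    rw [hecoe]; exact hΦd
  set G : ℝ × ℝ × ℝ → ℝ × ℝ × ℝ := hΦe.localInverse Φ e p₀ with hG
  have hΦp₀ : Φ p₀ = (0, x₀, 0) := by simp [Φ, Hf, p₀, h0]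
  have himg : G (Φ p₀) = p₀ := hΦe.localInverse_apply_image
  have hright : ∀ᶠ y in 𝓝 (Φ p₀), Φ (G y) = y := hΦe.eventually_right_inverse
  have hcont : ContinuousAt G (Φ p₀) := hΦe.localInverse_continuousAt
  -- the injection ι q = (0, q)
  set ι : ℝ × ℝ → ℝ × ℝ × ℝ := fun q => ((0 : ℝ), q) with hι
  have hιc : ContinuousAt ι (x₀, 0) := (continuous_const.prodMk continuous_id).continuousAt
  have hιv : ι (x₀, 0) = Φ p₀ := by simp [ι, hΦp₀]
  refine ⟨fun q => (G (ι q)).1, ?_, ?_, ?_⟩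
  · show (G (ι (x₀, 0))).1 = z₀
    rw [hιv, himg]
  · have hc2 : ContinuousAt G (ι (x₀, 0)) := by rw [hιv]; exact hcont
    exact (hc2.comp hιc).fst
  · have hten : Tendsto ι (𝓝 (x₀, 0)) (𝓝 (Φ p₀)) := hιv ▸ hιc.tendsto
    filter_upwards [hten.eventually hright] with q hq
    have h2 : (G (ι q)).2 = q := by
      have := congrArg Prod.snd hq
      simpa [Φ, ι] using this
    have h1 : Hf (G (ι q)) = 0 := by
      have := congrArg Prod.fst hq
      simpa [Φ, ι] using this
    simpa [Hf, h2] using h1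

open Filter Topology in
/-- Standardizing equations (lifting direction): if `H` is C¹, `H(z₀, x₀, 0) = 0`
and `∂H/∂z (z₀, x₀, 0) ≠ 0`, then for all hyperreals `x ≈ x₀` and `d ≈ 0` there is
a hyperreal `z` with standard part `z₀` satisfying the lifted equation
`H*(z, x, d) = 0`. -/
theorem standard_solution_lifts (H : ℝ → ℝ → ℝ → ℝ)
    (hH : ContDiff ℝ 1 (fun p : ℝ × ℝ × ℝ => H p.1 p.2.1 p.2.2))
    (z₀ x₀ : ℝ) (h0 : H z₀ x₀ 0 = 0)
    (hJ : deriv (fun z => H z x₀ 0) z₀ ≠ 0) :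
    ∀ x d : ℝ*, Infinitesimal (x - (x₀ : ℝ*)) → Infinitesimal d →
      ∃ z : ℝ*, IsSt z z₀ ∧ Hyperreal.lift3 H z x d = 0 := by
  obtain ⟨g, hg0, hgc, hgeq⟩ := exists_local_solution_map H hH z₀ x₀ h0 hJ
  intro x d hx hd
  obtain ⟨f, rfl⟩ := ofSeq_surjective x
  obtain ⟨k, rfl⟩ := ofSeq_surjective d
  have hx' : IsSt (ofSeq (fun n => f n - x₀)) 0 := hx
  have hf : Tendsto f (hyperfilter ℕ) (𝓝 x₀) := by
    have := isSt_ofSeq_iff_tendsto.1 hx'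
    rwa [tendsto_sub_nhds_zero_iff] at this
  have hk : Tendsto k (hyperfilter ℕ : Filter ℕ) (𝓝 (0 : ℝ)) :=
    isSt_ofSeq_iff_tendsto.1 hd
  have htup : Tendsto (fun n => (f n, k n)) (hyperfilter ℕ : Filter ℕ) (𝓝 ((x₀, 0) : ℝ × ℝ)) :=
    hf.prodMk_nhds hk
  refine ⟨ofSeq (fun n => g (f n, k n)), ?_, ?_⟩
  · refine isSt_ofSeq_iff_tendsto.2 ?_
    have := hgc.tendsto.comp htup
    rwa [hg0] at this
  · have hev : ∀ᶠ n in (hyperfilter ℕ : Filter ℕ), H (g (f n, k n)) (f n) (k n) = 0 :=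
      htup.eventually hgeq
    have hr : Hyperreal.lift3 H (ofSeq fun n => g (f n, k n)) (ofSeq f) (ofSeq k)
        = ofSeq (fun n => H (g (f n, k n)) (f n) (k n)) := rfl
    have h00 : (0 : ℝ*) = ofSeq (fun _ => 0) := rfl
    rw [hr, h00]
    exact Filter.Germ.coe_eq.2 hev
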